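/- arXiv:math/0206012 — 2 statements merged into one kernel-verified Lean document; each statement's English description precedes it below -/
import Mathlib

section
/- Let c' : V'₂ → V'₁ and c'' : V''₂ → V''₁ be linear maps between finite-dimensional complex vector spaces with V'₁ ⊕ V'₂ ≠ 0 and V''₁ ⊕ V''₂ ≠ 0. Define C : Hom(V''₁,V'₁) ⊕ Hom(V''₂,V'₂) → Hom(V''₂,V'₁) by C(ψ₁,ψ₂) = c'∘ψ₂ - ψ₁∘c''. If C is an isomorphism, then exactly one of the following holds: (1) V'₁ = V''₂ = 0 and c' = c'' = 0; (2) V''₁ = 0, V'₁, V'₂, V''₂ are all nonzero, and c' : V'₂ → V'₁ is an isomorphism; (3) V'₂ = 0, V'₁, V''₁, V''₂ are all nonzero, and c'' : V''₂ → V''₁ is an isomorphism. In particular, if all four spaces V'₁, V'₂, V''₁, V''₂ are nonzero then C cannot be an isomorphism. -/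
/-- For a nonzero vector in a vector space there is a linear functional taking value 1. -/
lemma aux_dual_one {V : Type*} [AddCommGroup V] [Module ℂ V] {x : V} (hx : x ≠ 0) :
    ∃ g : V →ₗ[ℂ] ℂ, g x = 1 := by
  obtain ⟨g, hg⟩ := (LinearMap.toSpanSingleton ℂ V x).exists_leftInverse_of_injective
    (LinearMap.ker_toSpanSingleton ℂ hx)
  refine ⟨g, ?_⟩
  have := LinearMap.congr_fun hg 1
  simpa [LinearMap.toSpanSingleton_apply_one] using this

/-- Lemma on linear maps: if `C(ψ₁,ψ₂) = c'∘ψ₂ − ψ₁∘c''` is an isomorphism, then exactly one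
of three alternatives occurs; in particular, if all four spaces are nonzero, `C` cannot be
an isomorphism. -/
theorem stmt_0
    (V'₁ V'₂ V''₁ V''₂ : Type*)
    [AddCommGroup V'₁] [Module ℂ V'₁] [FiniteDimensional ℂ V'₁]
    [AddCommGroup V'₂] [Module ℂ V'₂] [FiniteDimensional ℂ V'₂]
    [AddCommGroup V''₁] [Module ℂ V''₁] [FiniteDimensional ℂ V''₁]
    [AddCommGroup V''₂] [Module ℂ V''₂] [FiniteDimensional ℂ V''₂]
    (h' : Nontrivial (V'₁ × V'₂)) (h'' : Nontrivial (V''₁ × V''₂))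
    (c' : V'₂ →ₗ[ℂ] V'₁) (c'' : V''₂ →ₗ[ℂ] V''₁)
    (hC : Function.Bijective
      (fun ψ : (V''₁ →ₗ[ℂ] V'₁) × (V''₂ →ₗ[ℂ] V'₂) =>
        c'.comp ψ.2 - ψ.1.comp c'')) :
    ((Subsingleton V'₁ ∧ Subsingleton V''₂ ∧ c' = 0 ∧ c'' = 0) ∨
     (Subsingleton V''₁ ∧ Nontrivial V'₁ ∧ Nontrivial V'₂ ∧ Nontrivial V''₂ ∧
        Function.Bijective c') ∨
     (Subsingleton V'₂ ∧ Nontrivial V'₁ ∧ Nontrivial V''₁ ∧ Nontrivial V''₂ ∧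
        Function.Bijective c''))
    ∧ (Nontrivial V'₁ → Nontrivial V'₂ → Nontrivial V''₁ → Nontrivial V''₂ → False) := by
  obtain ⟨hCinj, hCsurj⟩ := hC
  -- the map `C` as a linear map
  set L : ((V''₁ →ₗ[ℂ] V'₁) × (V''₂ →ₗ[ℂ] V'₂)) →ₗ[ℂ] (V''₂ →ₗ[ℂ] V'₁) :=
    { toFun := fun ψ => c'.comp ψ.2 - ψ.1.comp c''
      map_add' := by
        intro a b; ext x
        simp [LinearMap.comp_apply, map_add]
        abel
      map_smul' := by
        intro m a; ext x
        simp [LinearMap.comp_apply, smul_sub] } with hL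
  have hLbij : Function.Bijective L := ⟨hCinj, hCsurj⟩
  -- dimension equation
  have hdim : Module.finrank ℂ V''₁ * Module.finrank ℂ V'₁ + Module.finrank ℂ V''₂ * Module.finrank ℂ V'₂
      = Module.finrank ℂ V''₂ * Module.finrank ℂ V'₁ := by
    have h := (LinearEquiv.ofBijective L hLbij).finrank_eq
    rwa [Module.finrank_prod, Module.finrank_linearMap, Module.finrank_linearMap,
      Module.finrank_linearMap] at h
  -- injectivity of C forces c' injective when V''₂ is nontrivial
  have keyA : Nontrivial V''₂ → Function.Injective c' := by
    intro hnt
    rw [← LinearMap.ker_eq_bot]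
    by_contra hk
    obtain ⟨v, hv_mem, hv⟩ := (LinearMap.ker c').ne_bot_iff.mp hk
    obtain ⟨x, hx⟩ := exists_ne (0 : V''₂)
    obtain ⟨g, hg⟩ := aux_dual_one hx
    have hcv : c' v = 0 := hv_mem
    have heq : (fun ψ : (V''₁ →ₗ[ℂ] V'₁) × (V''₂ →ₗ[ℂ] V'₂) =>
        c'.comp ψ.2 - ψ.1.comp c'') (0, g.smulRight v)
        = (fun ψ : (V''₁ →ₗ[ℂ] V'₁) × (V''₂ →ₗ[ℂ] V'₂) =>
        c'.comp ψ.2 - ψ.1.comp c'') (0, 0) := by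
      ext y
      simp [LinearMap.comp_apply, hcv]
    have := hCinj heq
    have hz : (g.smulRight v) = 0 := by
      have := congrArg Prod.snd this
      simpa using this
    have : v = 0 := by
      have := LinearMap.congr_fun hz x
      simpa [hg] using this
    exact hv this
  -- injectivity of C forces c'' surjective when V'₁ is nontrivial
  have keyB : Nontrivial V'₁ → Function.Surjective c'' := by
    intro hnt
    rw [← LinearMap.range_eq_top]
    by_contra hr
    haveI : Nontrivial (V''₁ ⧸ LinearMap.range c'') :=
      Submodule.Quotient.nontrivial_iff.mpr hr
    obtain ⟨z, hz⟩ := exists_ne (0 : V''₁ ⧸ LinearMap.range c'')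
    obtain ⟨g, hg⟩ := aux_dual_one hz
    obtain ⟨u, hu⟩ := exists_ne (0 : V'₁)
    set μ : V''₁ →ₗ[ℂ] ℂ := g.comp (LinearMap.range c'').mkQ with hμ
    have hμc : ∀ y : V''₂, μ (c'' y) = 0 := by
      intro y
      have : ((LinearMap.range c'').mkQ) (c'' y) = 0 := by
        simp [Submodule.Quotient.mk_eq_zero]
      simp [hμ, LinearMap.comp_apply, this]
    have heq : (fun ψ : (V''₁ →ₗ[ℂ] V'₁) × (V''₂ →ₗ[ℂ] V'₂) =>
        c'.comp ψ.2 - ψ.1.comp c'') (μ.smulRight u, 0)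
        = (fun ψ : (V''₁ →ₗ[ℂ] V'₁) × (V''₂ →ₗ[ℂ] V'₂) =>
        c'.comp ψ.2 - ψ.1.comp c'') (0, 0) := by
      ext y
      simp [LinearMap.comp_apply, hμc y]
    have := hCinj heq
    have hz1 : (μ.smulRight u) = 0 := by
      have := congrArg Prod.fst this
      simpa using this
    obtain ⟨w, hw⟩ := (LinearMap.range c'').mkQ_surjective z
    have : u = 0 := by
      have h1 := LinearMap.congr_fun hz1 w
      have h2 : μ w = 1 := by simp [hμ, LinearMap.comp_apply, hw, hg]
      simpa [h2] using h1
    exact hu this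
  -- surjectivity of C forces: c'' injective or c' surjective
  have keyC : ¬ Function.Surjective c' → Function.Injective c'' := by
    intro hns
    rw [← LinearMap.ker_eq_bot]
    by_contra hk
    obtain ⟨v, hv_mem, hv⟩ := (LinearMap.ker c'').ne_bot_iff.mp hk
    obtain ⟨u, hu⟩ := not_forall.mp hns
    obtain ⟨g, hg⟩ := aux_dual_one hv
    obtain ⟨⟨ψ₁, ψ₂⟩, hf⟩ := hCsurj (g.smulRight u)
    have h1 := LinearMap.congr_fun hf v
    have hcv : c'' v = 0 := hv_mem
    have : c' (ψ₂ v) = u := by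
      simpa [LinearMap.comp_apply, hcv, hg] using h1
    exact hu ⟨ψ₂ v, this⟩
  -- main case analysis
  rcases subsingleton_or_nontrivial V'₁ with hp | hp
  · -- alternative (1)
    haveI := hp
    have hq : Nontrivial V'₂ := by
      rcases subsingleton_or_nontrivial V'₂ with h | h
      · exact absurd h' (not_nontrivial _)
      · exact h
    have hp0 : Module.finrank ℂ V'₁ = 0 := Module.finrank_zero_iff.mpr hp
    have hq0 : 0 < Module.finrank ℂ V'₂ := Module.finrank_pos_iff.mpr hq
    have hb0 : Module.finrank ℂ V''₂ = 0 := by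
      rw [hp0] at hdim
      rcases Nat.mul_eq_zero.mp (by omega : Module.finrank ℂ V''₂ * Module.finrank ℂ V'₂ = 0) with h | h
      · exact h
      · omega
    haveI hbss : Subsingleton V''₂ := Module.finrank_zero_iff.mp hb0
    refine ⟨Or.inl ⟨hp, hbss, ?_, ?_⟩, fun h1 _ _ _ => absurd h1 (not_nontrivial _)⟩
    · ext x; exact Subsingleton.elim _ _
    · ext x
      have : x = 0 := Subsingleton.elim _ _
      simp [this]
  · -- V'₁ nontrivial
    have hcs : Function.Surjective c'' := keyB hp
    have hb : Nontrivial V''₂ := by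
      rcases subsingleton_or_nontrivial V''₂ with h | h
      · haveI := h
        haveI : Subsingleton V''₁ := hcs.subsingleton
        exact absurd h'' (not_nontrivial _)
      · exact h
    have hci : Function.Injective c' := keyA hb
    have hp0 : 0 < Module.finrank ℂ V'₁ := Module.finrank_pos_iff.mpr hp
    have hb0 : 0 < Module.finrank ℂ V''₂ := Module.finrank_pos_iff.mpr hb
    by_cases hsurj : Function.Surjective c'
    · -- alternative (2)
      have hcb : Function.Bijective c' := ⟨hci, hsurj⟩
      have hpq : Module.finrank ℂ V'₂ = Module.finrank ℂ V'₁ := (LinearEquiv.ofBijective c' hcb).finrank_eq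
      have hq : Nontrivial V'₂ := (Module.finrank_pos_iff (R := ℂ)).mp (by omega)
      have ha0 : Module.finrank ℂ V''₁ = 0 := by
        rw [hpq] at hdim
        rcases Nat.mul_eq_zero.mp (by omega : Module.finrank ℂ V''₁ * Module.finrank ℂ V'₁ = 0) with h | h
        · exact h
        · omega
      haveI hass : Subsingleton V''₁ := Module.finrank_zero_iff.mp ha0
      exact ⟨Or.inr (Or.inl ⟨hass, hp, hq, hb, hcb⟩),
        fun _ _ h3 _ => absurd h3 (not_nontrivial _)⟩
    · -- alternative (3)
      have hcinj'' : Function.Injective c'' := keyC hsurj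
      have hcb : Function.Bijective c'' := ⟨hcinj'', hcs⟩
      have hab : Module.finrank ℂ V''₂ = Module.finrank ℂ V''₁ :=
        (LinearEquiv.ofBijective c'' hcb).finrank_eq
      have ha : Nontrivial V''₁ := (Module.finrank_pos_iff (R := ℂ)).mp (by omega)
      have hq0 : Module.finrank ℂ V'₂ = 0 := by
        rw [← hab] at hdim
        rcases Nat.mul_eq_zero.mp (by omega : Module.finrank ℂ V''₂ * Module.finrank ℂ V'₂ = 0) with h | h
        · omega
        · exact h
      haveI hqss : Subsingleton V'₂ := Module.finrank_zero_iff.mp hq0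
      exact ⟨Or.inr (Or.inr ⟨hqss, hp, ha, hb, hcb⟩),
        fun _ h2 _ _ => absurd h2 (not_nontrivial _)⟩
end

section
/- Let p ≤ q be positive integers with gcd(p,q) = k, n = p+q, g ≥ 2 an integer, and τ_M = 2p(g−1). Then the number of classes [a,b] ∈ (ℤ⊕ℤ)/(p,q)ℤ with |τ(a,b)| ≤ τ_M, where τ(a,b) = (2/n)(qa−pb), equals 2np(g−1) + k. -/
set_option maxHeartbeats 1000000


/-- The number of classes `[a,b] ∈ (ℤ⊕ℤ)/(p,q)ℤ` with `|τ(a,b)| ≤ τ_M = 2p(g−1)` equals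
`2np(g−1) + k`, where `n = p+q` and `k = gcd(p,q)`. -/
theorem stmt_5 (p q k n g : ℕ) (hp : 0 < p) (hpq : p ≤ q) (hk : Nat.gcd p q = k)
    (hn : n = p + q) (hg : 2 ≤ g) :
    Set.ncard {x : (ℤ × ℤ) ⧸ AddSubgroup.zmultiples ((p : ℤ), (q : ℤ)) |
        ∃ a b : ℤ, QuotientAddGroup.mk (a, b) = x ∧
          |2 * ((q : ℚ) * a - (p : ℚ) * b) / (n : ℚ)| ≤ 2 * (p : ℚ) * ((g : ℚ) - 1)}
      = 2 * n * p * (g - 1) + k := by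
  subst hn
  have hk0 : 0 < k := hk ▸ Nat.gcd_pos_of_pos_left q hp
  have hdp : k ∣ p := hk ▸ Nat.gcd_dvd_left p q
  have hdq : k ∣ q := hk ▸ Nat.gcd_dvd_right p q
  obtain ⟨p', hp'⟩ := hdp
  obtain ⟨q', hq'⟩ := hdq
  subst hp'; subst hq'
  rw [Nat.gcd_mul_left] at hk
  have hcop : Nat.gcd p' q' = 1 :=
    Nat.eq_of_mul_eq_mul_left hk0 (hk.trans (Nat.mul_one k).symm)
  have hp'0 : 0 < p' := Nat.pos_of_ne_zero fun h => by simp [h] at hp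
  set u : ℤ := Nat.gcdA p' q' with hu
  set v : ℤ := Nat.gcdB p' q' with hv
  have hbez : (p' : ℤ) * u + (q' : ℤ) * v = 1 := by
    have := Nat.gcd_eq_gcd_ab p' q'
    rw [hcop] at this
    exact_mod_cast this.symm
  set M : ℕ := (k * p' + k * q') * p' * (g - 1) with hM
  set Ψ : ℤ × ℤ → ℤ × ℤ := fun st => (st.1 * p' - st.2 * v, st.1 * q' + st.2 * u) with hΨ
  set T : Finset (ℤ × ℤ) := Finset.Ico (0:ℤ) (k:ℤ) ×ˢ Finset.Icc (-(M:ℤ)) ((M:ℤ)) with hT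
  have htau : ∀ s t : ℤ, ((k*q' : ℕ) : ℤ) * (s * p' - t * v) - ((k*p' : ℕ):ℤ) * (s * q' + t * u) = -(t * k) := by
    intro s t
    push_cast
    linear_combination (-(t * (k:ℤ))) * hbez
  have hZ : ∀ t : ℤ, (|2 * (-(t*(k:ℤ)))| ≤ 2 * ((k*p' : ℕ) : ℤ) * ((g:ℤ)-1) * ((k*p'+k*q' : ℕ):ℤ) ↔ |t| ≤ (M : ℤ)) := by
    intro t
    have hg1 : 1 ≤ g := by omega
    have habs : |2 * -(t*(k:ℤ))| = 2*(k:ℤ)*|t| := by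
      rw [abs_mul, abs_neg, abs_mul]
      simp [abs_of_nonneg, Int.abs_natCast]
      ring
    rw [habs, hM]
    push_cast [Nat.cast_sub hg1]
    constructor
    · intro h
      nlinarith [abs_nonneg t, (by exact_mod_cast hk0 : (0:ℤ) < (k:ℤ))]
    · intro h
      nlinarith [abs_nonneg t, (by exact_mod_cast hk0 : (0:ℤ) < (k:ℤ))]
  have hn0 : (0:ℚ) < ((k*p' + k*q' : ℕ) : ℚ) := by
    have : 0 < k * p' + k * q' := by positivity
    exact_mod_cast this
  have hcond : ∀ t : ℤ, (|2 * ((-(t*(k:ℤ)) : ℤ) : ℚ) / ((k*p' + k*q' : ℕ) : ℚ)| ≤ 2 * ((k*p' : ℕ):ℚ) * ((g:ℚ) - 1) ↔ |t| ≤ (M : ℤ)) := by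
    intro t
    rw [abs_div, abs_of_pos hn0, div_le_iff₀ hn0]
    rw [← hZ t]
    push_cast
    constructor
    · intro h; exact_mod_cast h
    · intro h; exact_mod_cast h
  have hset : {x : (ℤ × ℤ) ⧸ AddSubgroup.zmultiples (((k*p' : ℕ) : ℤ), ((k*q' : ℕ) : ℤ)) |
        ∃ a b : ℤ, QuotientAddGroup.mk (a, b) = x ∧
          |2 * (((k*q' : ℕ) : ℚ) * a - ((k*p' : ℕ) : ℚ) * b) / ((k*p' + k*q' : ℕ) : ℚ)| ≤ 2 * ((k*p' : ℕ) : ℚ) * ((g : ℚ) - 1)}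
      = (fun st => (QuotientAddGroup.mk (Ψ st) : (ℤ × ℤ) ⧸ AddSubgroup.zmultiples (((k*p' : ℕ) : ℤ), ((k*q' : ℕ) : ℤ)))) '' ↑T := by
    ext x
    simp only [Set.mem_setOf_eq, Set.mem_image, Finset.coe_product, Set.mem_prod,
      Finset.mem_coe, Finset.mem_Ico, Finset.mem_Icc, hT, Finset.mem_product]
    constructor
    · rintro ⟨a, b, hmk, hc⟩
      set t : ℤ := (p':ℤ) * b - (q':ℤ) * a with ht
      set s₀ : ℤ := u * a + v * b with hs₀
      have ha : s₀ * p' - t * v = a := by linear_combination a * hbez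
      have hb : s₀ * q' + t * u = b := by linear_combination b * hbez
      have heq : ((k*q' : ℕ) : ℤ) * a - ((k*p' : ℕ):ℤ) * b = -(t * k) := by
        push_cast [ht]; ring
      have hc' : |t| ≤ (M : ℤ) := by
        apply (hcond t).mp
        rw [show ((-(t*(k:ℤ)) : ℤ) : ℚ) = ((k*q' : ℕ) : ℚ) * a - ((k*p' : ℕ) : ℚ) * b from by
          exact_mod_cast congrArg (Int.cast : ℤ → ℚ) heq.symm]
        exact hc
      have hkZne : ((k:ℕ) : ℤ) ≠ 0 := by exact_mod_cast hk0.ne'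
      have hkZpos : (0:ℤ) < ((k:ℕ) : ℤ) := by exact_mod_cast hk0
      refine ⟨(s₀ % k, t), ⟨⟨⟨Int.emod_nonneg s₀ hkZne,
        Int.emod_lt_of_pos s₀ hkZpos⟩, abs_le.mp hc'⟩, ?_⟩⟩
      · rw [← hmk]
        apply QuotientAddGroup.eq.mpr
        refine AddSubgroup.mem_zmultiples_iff.mpr ⟨s₀ / k, ?_⟩
        have hdm : (k:ℤ) * (s₀ / k) + s₀ % k = s₀ := Int.mul_ediv_add_emod s₀ k
        simp only [hΨ, Prod.smul_mk, smul_eq_mul, Prod.neg_mk, Prod.mk_add_mk, Prod.mk.injEq]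
        constructor
        · push_cast
          linear_combination (p':ℤ) * hdm - ha + 2*a*hbez
        · push_cast
          linear_combination (q':ℤ) * hdm - hb + 2*b*hbez
    · rintro ⟨⟨s, t⟩, ⟨⟨hs0, hsk⟩, ht⟩, rfl⟩
      refine ⟨s * p' - t * v, s * q' + t * u, rfl, ?_⟩
      have h2 : ((k*q' : ℕ) : ℚ) * ((s * (p':ℤ) - t * v : ℤ) : ℚ) - ((k*p' : ℕ) : ℚ) * ((s * (q':ℤ) + t * u : ℤ) : ℚ) = ((-(t*(k:ℤ)) : ℤ) : ℚ) := by
        exact_mod_cast congrArg (Int.cast : ℤ → ℚ) (htau s t)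
      rw [h2]
      exact (hcond t).mpr (abs_le.mpr ⟨ht.1, ht.2⟩)
  rw [hset]
  rw [Set.ncard_image_of_injOn, Set.ncard_coe_finset]
  · rw [hT, Finset.card_product, Int.card_Ico, Int.card_Icc]
    rw [show ((k:ℤ) - 0).toNat = k from by simp]
    rw [show ((M:ℤ) + 1 - -(M:ℤ)) = ((2*M+1 : ℕ) : ℤ) from by push_cast; ring, Int.toNat_natCast]
    rw [hM]
    ring
  · rintro ⟨s, t⟩ hst ⟨s', t'⟩ hst' h
    simp only [hT, Finset.coe_product, Set.mem_prod, Finset.mem_coe, Finset.mem_Ico,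
      Finset.mem_Icc] at hst hst'
    obtain ⟨c, hc⟩ := AddSubgroup.mem_zmultiples_iff.mp (QuotientAddGroup.eq.mp h)
    simp only [hΨ, Prod.smul_mk, smul_eq_mul, Prod.neg_mk, Prod.mk_add_mk, Prod.mk.injEq] at hc
    obtain ⟨hc1, hc2⟩ := hc
    push_cast at hc1 hc2
    have htt : t' = t := by linear_combination (q':ℤ) * hc1 - (p':ℤ) * hc2 + (t - t') * hbez
    have hss : (s' - s) * (p' : ℤ) = (c * k) * (p' : ℤ) := by linear_combination -hc1 + v * htt
    have hp'ne : ((p':ℕ) : ℤ) ≠ 0 := by exact_mod_cast hp'0.ne'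
    have hss' : s' - s = c * k := mul_right_cancel₀ hp'ne hss
    have hkZ : (0:ℤ) < (k:ℤ) := by exact_mod_cast hk0
    have hc0 : c = 0 := by
      rcases lt_trichotomy c 0 with h'|h'|h'
      · nlinarith [hst.1.1, hst.1.2, hst'.1.1, hst'.1.2]
      · exact h'
      · nlinarith [hst.1.1, hst.1.2, hst'.1.1, hst'.1.2]
    rw [hc0, zero_mul] at hss'
    have hseq : s' = s := by omega
    simp [hseq, htt]
end
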